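/- For every positive integer n, one has F̃(0) = 0, the function F̃ has derivative at λ = 0 equal to (2nπ − sinh(2nπ)) / (2 n³π³ · cosh²(nπ)), and this derivative is strictly negative. Hence λ = 0 is a simple root of the eigenvalue equation. -/

import Mathlib

open Real

lemma hasDerivAt_tanh' (x : ℝ) : HasDerivAt Real.tanh (1 / Real.cosh x ^ 2) x := by
  have h : HasDerivAt (fun y => Real.sinh y / Real.cosh y)
      ((Real.cosh x * Real.cosh x - Real.sinh x * Real.sinh x) / Real.cosh x ^ 2) x :=
    (Real.hasDerivAt_sinh x).div (Real.hasDerivAt_cosh x) (ne_of_gt (Real.cosh_pos x))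
  have e : (Real.cosh x * Real.cosh x - Real.sinh x * Real.sinh x) = 1 := by
    nlinarith [Real.cosh_sq_sub_sinh_sq x]
  rw [e] at h
  convert h using 1
  ext y
  exact Real.tanh_eq_sinh_div_cosh y

lemma HasDerivAt.tanh' {f : ℝ → ℝ} {f' x : ℝ} (hf : HasDerivAt f f' x) :
    HasDerivAt (fun y => Real.tanh (f y)) (1 / Real.cosh (f x) ^ 2 * f') x :=
  (hasDerivAt_tanh' (f x)).comp x hf

lemma aux_deriv (c a : ℝ) (hc : 0 < c) :
    HasDerivAt (fun l : ℝ => Real.tanh (Real.sqrt (a * l + c)) / Real.sqrt (a * l + c))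
      (a * (Real.sqrt c / Real.cosh (Real.sqrt c) ^ 2 - Real.tanh (Real.sqrt c))
        / (2 * c * Real.sqrt c)) 0 := by
  have hc0 : c ≠ 0 := ne_of_gt hc
  have hs : (0:ℝ) < Real.sqrt c := Real.sqrt_pos.2 hc
  have hsq : Real.sqrt c ≠ 0 := ne_of_gt hs
  have h1 : HasDerivAt (fun l : ℝ => a * l + c) a 0 := by
    simpa using ((hasDerivAt_id (0:ℝ)).const_mul a).add_const c
  have he : a * (0:ℝ) + c = c := by ring
  have h2 : HasDerivAt (fun l : ℝ => Real.sqrt (a * l + c)) (a / (2 * Real.sqrt c)) 0 := by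
    have := h1.sqrt (by rw [he]; exact hc0)
    rwa [he] at this
  have h3 : HasDerivAt (fun l : ℝ => Real.tanh (Real.sqrt (a * l + c)))
      (1 / Real.cosh (Real.sqrt c) ^ 2 * (a / (2 * Real.sqrt c))) 0 := by
    have := h2.tanh'
    simp only [he] at this
    exact this
  have h4 := h3.div h2 (by simpa [he] using hsq)
  simp only [he] at h4
  convert h4 using 1
  · rfl
  · rfl
  · ext l; simp [div_eq_mul_inv]
  have hch : Real.cosh (Real.sqrt c) ≠ 0 := ne_of_gt (Real.cosh_pos _)
  have hcs : Real.sqrt c * Real.sqrt c = c := Real.mul_self_sqrt hc.le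
  field_simp
  ring_nf
  linear_combination (a * Real.sqrt c - a * Real.cosh (Real.sqrt c) ^ 2 * Real.tanh (Real.sqrt c)) * hcs

theorem stmt_3 (n : ℕ) (hn : 0 < n) :
    (Real.tanh (Real.sqrt ((0:ℝ) + (n : ℝ)^2 * π^2)) / Real.sqrt ((0:ℝ) + (n : ℝ)^2 * π^2)
      - Real.tanh (Real.sqrt ((n : ℝ)^2 * π^2 - 0)) / Real.sqrt ((n : ℝ)^2 * π^2 - 0) = 0)
    ∧ HasDerivAt
        (fun l : ℝ =>
          Real.tanh (Real.sqrt (l + (n : ℝ)^2 * π^2)) / Real.sqrt (l + (n : ℝ)^2 * π^2)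
            - Real.tanh (Real.sqrt ((n : ℝ)^2 * π^2 - l)) / Real.sqrt ((n : ℝ)^2 * π^2 - l))
        ((2 * (n : ℝ) * π - Real.sinh (2 * (n : ℝ) * π))
          / (2 * (n : ℝ)^3 * π^3 * (Real.cosh ((n : ℝ) * π))^2))
        0
    ∧ (2 * (n : ℝ) * π - Real.sinh (2 * (n : ℝ) * π))
        / (2 * (n : ℝ)^3 * π^3 * (Real.cosh ((n : ℝ) * π))^2) < 0 := by
  have hn' : (0:ℝ) < n := by exact_mod_cast hn
  have hc : (0:ℝ) < (n : ℝ)^2 * π^2 := by positivity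
  have hsc : Real.sqrt ((n : ℝ)^2 * π^2) = n * π := by
    rw [show (n:ℝ)^2 * π^2 = ((n:ℝ)*π)^2 by ring, Real.sqrt_sq (by positivity)]
  refine ⟨by simp, ?_, ?_⟩
  · have h1 := aux_deriv ((n : ℝ)^2 * π^2) 1 hc
    have h2 := aux_deriv ((n : ℝ)^2 * π^2) (-1) hc
    have h := h1.sub h2
    convert h using 1
    · rfl
    · rfl
    · funext l
      simp only [Pi.sub_apply]
      rw [show (1:ℝ) * l + (n:ℝ)^2 * π^2 = l + (n:ℝ)^2 * π^2 by ring,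
        show (-1:ℝ) * l + (n:ℝ)^2 * π^2 = (n:ℝ)^2 * π^2 - l by ring]
    · rw [hsc]
      have hch : (0:ℝ) < Real.cosh ((n:ℝ) * π) := Real.cosh_pos _
      rw [show 2 * (n:ℝ) * π = 2 * ((n:ℝ) * π) by ring, Real.sinh_two_mul, Real.tanh_eq_sinh_div_cosh]
      have hπ := Real.pi_pos
      field_simp
      ring
  · apply div_neg_of_neg_of_pos
    · have := Real.self_lt_sinh_iff.2 (show (0:ℝ) < 2 * n * π by positivity)
      linarith
    · positivity
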